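/- In the smooth RCSN setting, suppose φ is bounded below on E, that x̄ is an accumulation point of (x_k), and that φ satisfies the Kurdyka–Łojasiewicz property at x̄ with ψ(t) = M t^{1−θ} for some M > 0 and θ ∈ (1/2, 1): there exists η > 0 such that M(1−θ)(φ(x) − φ(x̄))^{−θ} · ‖∇φ(x)‖ ≥ 1 for all x with ‖x − x̄‖ ≤ η and φ(x̄) < φ(x) < φ(x̄) + η. Then there exist μ > 0 and k₀ ∈ ℕ such that ‖x_k − x̄‖ ≤ μ k^{−(1−θ)/(2θ−1)} for all k ≥ k₀. -/

import Mathlib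

open scoped RealInnerProductSpace
open Filter Topology


lemma rcsn_amgm {t p : ℝ} (ht : 0 ≤ t) (hp : 0 ≤ p) (hp1 : p ≤ 1) :
    t ^ p ≤ 1 - p + p * t := by
  have h := Real.geom_mean_le_arith_mean2_weighted hp (by linarith : (0:ℝ) ≤ 1 - p)
    ht zero_le_one (by ring)
  rw [Real.one_rpow, mul_one] at h
  linarith

lemma rcsn_concave {a b p : ℝ} (ha : 0 < a) (hab : a ≤ b) (hp : 0 ≤ p) (hp1 : p ≤ 1) :
    p * b ^ (p - 1) * (b - a) ≤ b ^ p - a ^ p := by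
  have hb : 0 < b := lt_of_lt_of_le ha hab
  have h1 : (a / b) ^ p ≤ 1 - p + p * (a / b) := rcsn_amgm (by positivity) hp hp1
  rw [Real.div_rpow ha.le hb.le] at h1
  have h3 : b ^ (p - 1) = b ^ p / b := by rw [Real.rpow_sub hb, Real.rpow_one]
  have hbp : (0:ℝ) < b ^ p := Real.rpow_pos_of_pos hb p
  rw [h3]
  have h4 : a ^ p ≤ (1 - p + p * (a / b)) * b ^ p := by
    calc a ^ p = a ^ p / b ^ p * b ^ p := by field_simp
    _ ≤ (1 - p + p * (a / b)) * b ^ p := mul_le_mul_of_nonneg_right h1 hbp.le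
  have h5 : (1 - p + p * (a / b)) * b ^ p = b ^ p - p * (b ^ p / b) * (b - a) := by
    field_simp; ring
  linarith

lemma rcsn_convex_neg {a b q : ℝ} (ha : 0 < a) (hab : a ≤ b) (hq : 0 < q) (hq1 : q ≤ 1) :
    q * b ^ (-q - 1) * (b - a) ≤ a ^ (-q) - b ^ (-q) := by
  have hb : 0 < b := lt_of_lt_of_le ha hab
  set t := a / b with htdef
  have ht0 : 0 < t := by positivity
  have ht1 : t ≤ 1 := by rw [htdef, div_le_one hb]; exact hab
  have hamgm : t ^ q ≤ 1 - q + q * t := rcsn_amgm ht0.le hq.le hq1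
  have htq : (0:ℝ) < t ^ q := Real.rpow_pos_of_pos ht0 q
  have hmul : t ^ q * (1 + q * (1 - t)) ≤ 1 := by
    have hpos : (0:ℝ) ≤ 1 + q * (1 - t) := by nlinarith
    nlinarith [mul_le_mul_of_nonneg_right hamgm hpos, sq_nonneg (q * (1 - t))]
  have hkey : 1 + q * (1 - t) ≤ t ^ (-q) := by
    rw [Real.rpow_neg ht0.le]
    have h := mul_le_mul_of_nonneg_left hmul (inv_nonneg.2 htq.le)
    rwa [← mul_assoc, inv_mul_cancel₀ htq.ne', one_mul, mul_one] at h
  have htnq : t ^ (-q) = a ^ (-q) / b ^ (-q) := by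
    rw [htdef, Real.div_rpow ha.le hb.le]
  have hbnq : (0:ℝ) < b ^ (-q) := Real.rpow_pos_of_pos hb _
  rw [htnq] at hkey
  have h4 : (1 + q * (1 - t)) * b ^ (-q) ≤ a ^ (-q) := by
    calc (1 + q * (1 - t)) * b ^ (-q) ≤ a ^ (-q) / b ^ (-q) * b ^ (-q) :=
      mul_le_mul_of_nonneg_right hkey hbnq.le
    _ = a ^ (-q) := by field_simp
  have h5 : b ^ (-q - 1) = b ^ (-q) / b := by rw [Real.rpow_sub hb, Real.rpow_one]
  have h6 : (1 + q * (1 - t)) * b ^ (-q) = b ^ (-q) + q * (b ^ (-q) / b) * (b - a) := by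
    rw [htdef]; field_simp
  rw [h5]; linarith


lemma rcsn_descent {E : Type*} [NormedAddCommGroup E] [InnerProductSpace ℝ E] [CompleteSpace E]
    {f : E → ℝ} (hf : Differentiable ℝ f) {L : ℝ} {x y : E}
    (hL : ∀ z ∈ segment ℝ x y, ‖gradient f z - gradient f x‖ ≤ L) :
    f y ≤ f x + ⟪gradient f x, y - x⟫ + L * ‖y - x‖ := by
  set w := gradient f x with hw
  have key : ∀ z ∈ segment ℝ x y,
      HasFDerivWithinAt (fun u => f u - ((InnerProductSpace.toDual ℝ E) w) u) (((InnerProductSpace.toDual ℝ E) (gradient f z - w) : E →L[ℝ] ℝ))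
        (segment ℝ x y) z := by
    intro z _
    have h1 : HasFDerivAt f ((InnerProductSpace.toDual ℝ E) (gradient f z)) z := (hf z).hasGradientAt.hasFDerivAt
    have h2 : HasFDerivAt (fun u => ((InnerProductSpace.toDual ℝ E) w) u) ((InnerProductSpace.toDual ℝ E) w : E →L[ℝ] ℝ) z :=
      ((InnerProductSpace.toDual ℝ E) w : E →L[ℝ] ℝ).hasFDerivAt
    have h3 := h1.sub h2
    rw [show (InnerProductSpace.toDual ℝ E) (gradient f z - w) = (InnerProductSpace.toDual ℝ E) (gradient f z) - (InnerProductSpace.toDual ℝ E) w from map_sub _ _ _]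
    exact h3.hasFDerivWithinAt
  have bound : ∀ z ∈ segment ℝ x y, ‖((InnerProductSpace.toDual ℝ E) (gradient f z - w) : E →L[ℝ] ℝ)‖ ≤ L := by
    intro z hz
    rw [show ‖((InnerProductSpace.toDual ℝ E) (gradient f z - w) : E →L[ℝ] ℝ)‖ = ‖gradient f z - w‖ from
      (InnerProductSpace.toDual ℝ E).norm_map _]
    exact hL z hz
  have hmvt := Convex.norm_image_sub_le_of_norm_hasFDerivWithin_le key bound (convex_segment x y)
    (left_mem_segment ℝ x y) (right_mem_segment ℝ x y)
  have happx : ((InnerProductSpace.toDual ℝ E) w) x = ⟪w, x⟫ := InnerProductSpace.toDual_apply_apply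
  have happy : ((InnerProductSpace.toDual ℝ E) w) y = ⟪w, y⟫ := InnerProductSpace.toDual_apply_apply
  have h4 : f y - ⟪w, y⟫ - (f x - ⟪w, x⟫) ≤ L * ‖y - x‖ := by
    have := (le_abs_self (f y - ((InnerProductSpace.toDual ℝ E) w) y - (f x - ((InnerProductSpace.toDual ℝ E) w) x))).trans (le_of_eq rfl)
    calc f y - ⟪w, y⟫ - (f x - ⟪w, x⟫) = f y - ((InnerProductSpace.toDual ℝ E) w) y - (f x - ((InnerProductSpace.toDual ℝ E) w) x) := by
          rw [happx, happy]
    _ ≤ ‖f y - ((InnerProductSpace.toDual ℝ E) w) y - (f x - ((InnerProductSpace.toDual ℝ E) w) x)‖ := le_abs_self _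
    _ ≤ L * ‖y - x‖ := hmvt
  have h5 : ⟪w, y - x⟫ = ⟪w, y⟫ - ⟪w, x⟫ := inner_sub_right w y x
  linarith

set_option maxHeartbeats 1000000 in
theorem rcsn_sublinear_rate_KL_exponent_gt_half
    {E : Type*} [NormedAddCommGroup E] [InnerProductSpace ℝ E] [FiniteDimensional ℝ E]
    (g h : E → ℝ) (hg : ContDiff ℝ 2 g) (hh : Differentiable ℝ h)
    (hhl : LocallyLipschitz (gradient h))
    (φ : E → ℝ) (hφ : ∀ y, φ y = g y - h y)
    (σ β ζ tmin ρmax : ℝ)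
    (hσ : σ ∈ Set.Ioo (0 : ℝ) 1) (hβ : β ∈ Set.Ioo (0 : ℝ) 1)
    (hζ : 0 < ζ) (htmin : 0 < tmin) (hρmax : 0 ≤ ρmax)
    (x d : ℕ → E) (τ ρ : ℕ → ℝ)
    (hwne : ∀ k, gradient φ (x k) ≠ 0)
    (hρk : ∀ k, ρ k ∈ Set.Icc 0 ρmax)
    (hdne : ∀ k, d k ≠ 0)
    (hdir : ∀ k, fderiv ℝ (gradient g) (x k) (d k) + ρ k • d k = -(gradient φ (x k)))
    (hdesc : ∀ k, ⟪gradient φ (x k), d k⟫ ≤ -ζ * ‖d k‖ ^ 2)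
    (hτpos : ∀ k, 0 < τ k)
    (hls : ∀ k, φ (x k + τ k • d k) ≤ φ (x k) + σ * τ k * ⟪gradient φ (x k), d k⟫)
    (hbt : ∀ k, tmin ≤ τ k ∨
      φ (x k) + σ * (τ k / β) * ⟪gradient φ (x k), d k⟫ < φ (x k + (τ k / β) • d k))
    (hupd : ∀ k, x (k + 1) = x k + τ k • d k)
    (hbdd : BddBelow (Set.range φ))
    (xb : E)
    (hacc : ∃ s : ℕ → ℕ, StrictMono s ∧ Tendsto (fun j => x (s j)) atTop (𝓝 xb))
    (M θ : ℝ) (hM : 0 < M) (hθ : θ ∈ Set.Ioo (1 / 2 : ℝ) 1)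
    (η : ℝ) (hη : 0 < η)
    (hKL : ∀ y : E, ‖y - xb‖ ≤ η → φ xb < φ y → φ y < φ xb + η →
      1 ≤ M * (1 - θ) * (φ y - φ xb) ^ (-θ) * ‖gradient φ y‖) :
    ∃ μ > (0 : ℝ), ∃ k₀ : ℕ, ∀ k ≥ k₀,
      ‖x k - xb‖ ≤ μ * (k : ℝ) ^ (-((1 - θ) / (2 * θ - 1))) := by
  obtain ⟨hσ0, hσ1⟩ := hσ
  obtain ⟨hβ0, hβ1⟩ := hβ
  obtain ⟨hθ0, hθ1⟩ := hθ
  obtain ⟨s, hsmono, hstend⟩ := hacc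
  -- basic differentiability
  have hgdiff : Differentiable ℝ g := hg.differentiable two_ne_zero
  have hφfun : φ = fun y => g y - h y := funext hφ
  have hφdiff : Differentiable ℝ φ := by rw [hφfun]; exact hgdiff.sub hh
  have hφcont : Continuous φ := hφdiff.continuous
  -- gradient of φ
  have hgradφ : ∀ y, gradient φ y = gradient g y - gradient h y := by
    intro y
    have h1 : HasFDerivAt g ((InnerProductSpace.toDual ℝ E) (gradient g y)) y :=
      (hgdiff y).hasGradientAt.hasFDerivAt
    have h2 : HasFDerivAt h ((InnerProductSpace.toDual ℝ E) (gradient h y)) y :=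
      (hh y).hasGradientAt.hasFDerivAt
    have h3 : HasGradientAt φ (gradient g y - gradient h y) y := by
      rw [hasGradientAt_iff_hasFDerivAt, map_sub, hφfun]
      exact h1.sub h2
    exact h3.gradient
  -- gradient g is C¹
  have hcg : ContDiff ℝ 1 (gradient g) := by
    have : ContDiff ℝ 1 (fderiv ℝ g) := hg.fderiv_right (by norm_num)
    exact ((InnerProductSpace.toDual ℝ E).symm.contDiff).comp this
  -- local Lipschitz of gradient g near xb
  obtain ⟨Kg, tg, htg, hlipg⟩ := (hcg.contDiffAt (x := xb)).exists_lipschitzOnWith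
  obtain ⟨Kh, th, hth, hliph⟩ := hhl xb
  obtain ⟨R₀, hR₀pos, hR₀sub⟩ : ∃ R₀ > 0, Metric.closedBall xb R₀ ⊆ tg ∩ th := by
    obtain ⟨ε, hε, hεsub⟩ := Metric.mem_nhds_iff.1 (Filter.inter_mem htg hth)
    exact ⟨ε / 2, by positivity, fun z hz =>
      hεsub (lt_of_le_of_lt (Metric.mem_closedBall.1 hz) (by linarith))⟩
  set Lc : ℝ := (Kg : ℝ) + (Kh : ℝ) + 1 with hLc
  have hLcpos : 0 < Lc := by positivity
  have hlipφ : ∀ u ∈ Metric.closedBall xb R₀, ∀ v ∈ Metric.closedBall xb R₀,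
      ‖gradient φ u - gradient φ v‖ ≤ Lc * ‖u - v‖ := by
    intro u hu v hv
    have hgu := hlipg.dist_le_mul u (hR₀sub hu).1 v (hR₀sub hv).1
    have hhu := hliph.dist_le_mul u (hR₀sub hu).2 v (hR₀sub hv).2
    rw [dist_eq_norm] at hgu hhu
    rw [hgradφ, hgradφ]
    have : gradient g u - gradient h u - (gradient g v - gradient h v)
        = (gradient g u - gradient g v) - (gradient h u - gradient h v) := by abel
    rw [this]
    calc ‖(gradient g u - gradient g v) - (gradient h u - gradient h v)‖
        ≤ ‖gradient g u - gradient g v‖ + ‖gradient h u - gradient h v‖ := norm_sub_le _ _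
    _ ≤ (Kg : ℝ) * ‖u - v‖ + (Kh : ℝ) * ‖u - v‖ := by
        rw [dist_eq_norm] at hgu hhu; exact add_le_add hgu hhu
    _ ≤ Lc * ‖u - v‖ := by
        have : (0:ℝ) ≤ ‖u - v‖ := norm_nonneg _
        nlinarith
  -- Hessian bound on the ball
  obtain ⟨C₀, hC₀⟩ := (isCompact_closedBall xb R₀).exists_bound_of_continuousOn
    ((hcg.continuous_fderiv one_ne_zero).continuousOn
      (s := Metric.closedBall xb R₀))
  set C : ℝ := max C₀ 0 + ρmax + 1 with hC
  have hCpos : 0 < C := by positivity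
  have hwd : ∀ k, x k ∈ Metric.closedBall xb R₀ → ‖gradient φ (x k)‖ ≤ C * ‖d k‖ := by
    intro k hk
    have h1 : ‖gradient φ (x k)‖ = ‖fderiv ℝ (gradient g) (x k) (d k) + ρ k • d k‖ := by
      rw [hdir k, norm_neg]
    rw [h1]
    calc ‖fderiv ℝ (gradient g) (x k) (d k) + ρ k • d k‖
        ≤ ‖fderiv ℝ (gradient g) (x k) (d k)‖ + ‖ρ k • d k‖ := norm_add_le _ _
    _ ≤ ‖fderiv ℝ (gradient g) (x k)‖ * ‖d k‖ + ρmax * ‖d k‖ := by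
        refine add_le_add ((fderiv ℝ (gradient g) (x k)).le_opNorm _) ?_
        rw [norm_smul, Real.norm_eq_abs, abs_of_nonneg (hρk k).1]
        exact mul_le_mul_of_nonneg_right (hρk k).2 (norm_nonneg _)
    _ ≤ C * ‖d k‖ := by
        have h2 := hC₀ (x k) hk
        have h3 : (0:ℝ) ≤ ‖d k‖ := norm_nonneg _
        have h4 : ‖fderiv ℝ (gradient g) (x k)‖ ≤ max C₀ 0 := le_max_of_le_left h2
        nlinarith
  -- sufficient decrease
  have hdec : ∀ k, σ * ζ * (τ k * ‖d k‖ ^ 2) ≤ φ (x k) - φ (x (k + 1)) := by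
    intro k
    have h1 := hls k
    have h2 := hdesc k
    have h3 := (hτpos k).le
    rw [hupd k]
    nlinarith [mul_le_mul_of_nonneg_left h2 (mul_pos hσ0 (hτpos k)).le]
  have hstrict : ∀ k, φ (x (k + 1)) < φ (x k) := by
    intro k
    have h1 := hdec k
    have h2 : 0 < ‖d k‖ := norm_pos_iff.2 (hdne k)
    have h4 : 0 < σ * ζ * (τ k * ‖d k‖ ^ 2) :=
      mul_pos (mul_pos hσ0 hζ) (mul_pos (hτpos k) (pow_pos h2 2))
    linarith
  have hanti : ∀ m n, m ≤ n → φ (x n) ≤ φ (x m) := by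
    intro m n hmn
    induction n, hmn using Nat.le_induction with
    | base => exact le_refl _
    | succ n hmn ih => exact (hstrict n).le.trans ih
  -- the limit of φ (x k) is φ xb
  have hφanti : Antitone (fun k => φ (x k)) := fun m n hmn => hanti m n hmn
  have hbdd2 : BddBelow (Set.range fun k => φ (x k)) := by
    obtain ⟨c, hc⟩ := hbdd
    exact ⟨c, by rintro _ ⟨k, rfl⟩; exact hc ⟨x k, rfl⟩⟩
  have hφlim' : Tendsto (fun k => φ (x k)) atTop (𝓝 (⨅ k, φ (x k))) :=
    tendsto_atTop_ciInf hφanti hbdd2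
  have hφlim : Tendsto (fun k => φ (x k)) atTop (𝓝 (φ xb)) := by
    have h1 : Tendsto (fun j => φ (x (s j))) atTop (𝓝 (φ xb)) :=
      (hφcont.tendsto xb).comp hstend
    have h2 : Tendsto (fun j => φ (x (s j))) atTop (𝓝 (⨅ k, φ (x k))) :=
      hφlim'.comp hsmono.tendsto_atTop
    rwa [tendsto_nhds_unique h2 h1] at hφlim'
  set r : ℕ → ℝ := fun k => φ (x k) - φ xb with hr
  have hrnonneg : ∀ k, 0 ≤ r k := by
    intro k
    have := le_of_tendsto hφlim (Filter.eventually_atTop.2 ⟨k, fun n hn => hanti k n hn⟩)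
    simpa [hr] using this
  have hrpos : ∀ k, 0 < r k := by
    intro k
    have h1 := hrnonneg (k + 1)
    have h2 := hstrict k
    simp only [hr] at *
    linarith
  have hrdec : ∀ k, r (k + 1) < r k := fun k => by
    simp only [hr]; linarith [hstrict k]
  have hranti : ∀ m n, m ≤ n → r n ≤ r m := fun m n hmn => by
    simp only [hr]; linarith [hanti m n hmn]
  have hr0 : Tendsto r atTop (𝓝 0) := by
    have := hφlim.sub_const (φ xb)
    simpa using this
  -- ψ values
  set ψd : ℕ → ℝ := fun k => M * (r k) ^ (1 - θ) with hψd
  have hψdnonneg : ∀ k, 0 ≤ ψd k := fun k => by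
    have := Real.rpow_nonneg (hrnonneg k) (1 - θ); positivity
  have hψdanti : ∀ m n, m ≤ n → ψd n ≤ ψd m := by
    intro m n hmn
    exact mul_le_mul_of_nonneg_left
      (Real.rpow_le_rpow (hrnonneg n) (hranti m n hmn) (by linarith)) hM.le
  set R : ℝ := min η R₀ / 2 with hR
  have hRpos : 0 < R := by positivity
  have hRη : 2 * R ≤ η := by rw [hR]; have := min_le_left η R₀; linarith
  have hRR₀ : 2 * R ≤ R₀ := by rw [hR]; have := min_le_right η R₀; linarith
  set B : ℝ := C / (σ * ζ) with hB
  have hBpos : 0 < B := by positivity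
  -- key step estimate
  have hstep : ∀ k, ‖x k - xb‖ ≤ 2 * R → r k < η →
      τ k * ‖d k‖ ≤ B * (ψd k - ψd (k + 1)) := by
    intro k hxk hrk
    have hx0 : x k ∈ Metric.closedBall xb R₀ := by
      rw [Metric.mem_closedBall, dist_eq_norm]; linarith
    have hkl : 1 ≤ M * (1 - θ) * (r k) ^ (-θ) * ‖gradient φ (x k)‖ := by
      have h1 : φ xb < φ (x k) := by have := hrpos k; simp only [hr] at this; linarith
      have h2 : φ (x k) < φ xb + η := by have : r k < η := hrk; simp only [hr] at this; linarith
      exact hKL (x k) (by linarith) h1 h2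
    have hCd := hwd k hx0
    have hA : 0 ≤ M * (1 - θ) * (r k) ^ (-θ) :=
      mul_nonneg (mul_nonneg hM.le (by linarith)) (Real.rpow_nonneg (hrnonneg k) _)
    have hcc : (1 - θ) * (r k) ^ (-θ) * (r k - r (k + 1)) ≤
        (r k) ^ (1 - θ) - (r (k + 1)) ^ (1 - θ) := by
      have := rcsn_concave (hrpos (k + 1)) (hrdec k).le
        (p := 1 - θ) (by linarith) (by linarith)
      rwa [show (1 - θ) - 1 = -θ by ring] at this
    have hdk : σ * ζ * (τ k * ‖d k‖ ^ 2) ≤ r k - r (k + 1) := by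
      have := hdec k; simp only [hr]; linarith
    have hD : 0 < ‖d k‖ := norm_pos_iff.2 (hdne k)
    have hw0 : 0 ≤ ‖gradient φ (x k)‖ := norm_nonneg _
    have hτk := hτpos k
    -- main chain
    have h1 : 1 ≤ M * (1 - θ) * (r k) ^ (-θ) * (C * ‖d k‖) :=
      hkl.trans (mul_le_mul_of_nonneg_left hCd hA)
    have h2 : σ * ζ * (τ k * ‖d k‖) ≤
        σ * ζ * (τ k * ‖d k‖) * (M * (1 - θ) * (r k) ^ (-θ) * (C * ‖d k‖)) :=
      le_mul_of_one_le_right (by positivity) h1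
    have h3 : σ * ζ * (τ k * ‖d k‖) * (M * (1 - θ) * (r k) ^ (-θ) * (C * ‖d k‖)) =
        C * (M * ((1 - θ) * (r k) ^ (-θ) * (σ * ζ * (τ k * ‖d k‖ ^ 2)))) := by ring
    have h4 : (1 - θ) * (r k) ^ (-θ) * (σ * ζ * (τ k * ‖d k‖ ^ 2)) ≤
        (r k) ^ (1 - θ) - (r (k + 1)) ^ (1 - θ) := by
      refine le_trans ?_ hcc
      exact mul_le_mul_of_nonneg_left hdk
        (mul_nonneg (by linarith) (Real.rpow_nonneg (hrnonneg k) _))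
    have h5 : σ * ζ * (τ k * ‖d k‖) ≤ C * (ψd k - ψd (k + 1)) := by
      rw [hψd]
      calc σ * ζ * (τ k * ‖d k‖) ≤
          C * (M * ((1 - θ) * (r k) ^ (-θ) * (σ * ζ * (τ k * ‖d k‖ ^ 2)))) := by
            rw [← h3]; exact h2
      _ ≤ C * (M * ((r k) ^ (1 - θ) - (r (k + 1)) ^ (1 - θ))) := by
            refine mul_le_mul_of_nonneg_left (mul_le_mul_of_nonneg_left h4 hM.le) hCpos.le
      _ = C * (M * (r k) ^ (1 - θ) - M * (r (k + 1)) ^ (1 - θ)) := by ring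
    rw [hB, div_mul_eq_mul_div, le_div_iff₀ (mul_pos hσ0 hζ)]
    calc τ k * ‖d k‖ * (σ * ζ) = σ * ζ * (τ k * ‖d k‖) := by ring
    _ ≤ C * (ψd k - ψd (k + 1)) := h5
  -- choose k₁
  have hψtend : Tendsto (fun k => B * ψd k) atTop (𝓝 0) := by
    have h1 : Tendsto (fun k => (r k) ^ (1 - θ)) atTop (𝓝 ((0:ℝ) ^ (1 - θ))) :=
      hr0.rpow_const (Or.inr (by linarith))
    rw [Real.zero_rpow (ne_of_gt (sub_pos.2 hθ1))] at h1
    have h2 := h1.const_mul (B * M)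
    rw [mul_zero] at h2
    refine h2.congr fun k => by rw [hψd]; ring
  have hev1 : ∀ᶠ k in atTop, B * ψd k < R / 2 ∧ B * ψd k ≤ β * R ∧ r k < η := by
    filter_upwards [hψtend.eventually (eventually_lt_nhds (show (0:ℝ) < R/2 by positivity)),
      hψtend.eventually (eventually_le_nhds (show (0:ℝ) < β * R by positivity)),
      hr0.eventually (eventually_lt_nhds hη)] with k e1 e2 e3
    exact ⟨e1, e2, e3⟩
  obtain ⟨K, hK⟩ := eventually_atTop.1 hev1
  obtain ⟨J, hJ⟩ := Metric.tendsto_atTop.1 hstend (R / 2) (by positivity)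
  -- choose the base index k₁
  set k₁ : ℕ := s (max J K) with hk₁
  have hk₁K : K ≤ k₁ := le_trans (le_max_right J K) hsmono.le_apply
  have hk₁x : ‖x k₁ - xb‖ < R / 2 := by
    have := hJ (max J K) (le_max_left J K)
    rwa [dist_eq_norm] at this
  have hKk : ∀ k, k₁ ≤ k → B * ψd k < R / 2 ∧ B * ψd k ≤ β * R ∧ r k < η :=
    fun k hk => hK k (le_trans hk₁K hk)
  set D : ℝ := ‖x k₁ - xb‖ + B * ψd k₁ with hD
  have hDR : D < R := by
    have := (hKk k₁ le_rfl).1; rw [hD]; linarith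
  have hstep_norm : ∀ k, ‖x (k + 1) - x k‖ = τ k * ‖d k‖ := by
    intro k
    rw [hupd k]
    simp [norm_smul, abs_of_pos (hτpos k)]
  have hball : ∀ k, k₁ ≤ k → ‖x k - xb‖ + B * ψd k ≤ D := by
    intro k hk
    induction k, hk using Nat.le_induction with
    | base => exact le_refl _
    | succ k hk ih =>
      have h0 : 0 ≤ B * ψd k := mul_nonneg hBpos.le (hψdnonneg k)
      have hxk : ‖x k - xb‖ ≤ 2 * R := by linarith
      have hst := hstep k hxk (hKk k hk).2.2
      have htri : ‖x (k + 1) - xb‖ ≤ ‖x k - xb‖ + τ k * ‖d k‖ := by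
        calc ‖x (k + 1) - xb‖ = ‖(x k - xb) + (x (k + 1) - x k)‖ := by
              congr 1; abel
        _ ≤ ‖x k - xb‖ + ‖x (k + 1) - x k‖ := norm_add_le _ _
        _ = ‖x k - xb‖ + τ k * ‖d k‖ := by rw [hstep_norm k]
      have hms : B * (ψd k - ψd (k + 1)) = B * ψd k - B * ψd (k + 1) := mul_sub _ _ _
      linarith
  have hinball : ∀ k, k₁ ≤ k → ‖x k - xb‖ ≤ 2 * R := by
    intro k hk
    have h0 : 0 ≤ B * ψd k := mul_nonneg hBpos.le (hψdnonneg k)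
    have := hball k hk
    linarith
  have hinR : ∀ k, k₁ ≤ k → ‖x k - xb‖ ≤ R := by
    intro k hk
    have h0 : 0 ≤ B * ψd k := mul_nonneg hBpos.le (hψdnonneg k)
    have := hball k hk
    linarith
  -- tail sums
  have hsum : ∀ k, k₁ ≤ k → ∀ m, k ≤ m → ‖x m - x k‖ ≤ B * (ψd k - ψd m) := by
    intro k hk m hm
    induction m, hm using Nat.le_induction with
    | base => simp
    | succ m hm ih =>
      have hst := hstep m (hinball m (le_trans hk hm)) (hKk m (le_trans hk hm)).2.2
      have htri : ‖x (m + 1) - x k‖ ≤ ‖x m - x k‖ + τ m * ‖d m‖ := by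
        calc ‖x (m + 1) - x k‖ = ‖(x m - x k) + (x (m + 1) - x m)‖ := by congr 1; abel
        _ ≤ ‖x m - x k‖ + ‖x (m + 1) - x m‖ := norm_add_le _ _
        _ = ‖x m - x k‖ + τ m * ‖d m‖ := by rw [hstep_norm m]
      have hms : B * (ψd m - ψd (m + 1)) = B * ψd m - B * ψd (m + 1) := mul_sub _ _ _
      have hms2 : B * (ψd k - ψd m) = B * ψd k - B * ψd m := mul_sub _ _ _
      have hms3 : B * (ψd k - ψd (m + 1)) = B * ψd k - B * ψd (m + 1) := mul_sub _ _ _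
      linarith
  -- distance to the limit point
  have hclose : ∀ k, k₁ ≤ k → ‖x k - xb‖ ≤ B * ψd k := by
    intro k hk
    have htd : Tendsto (fun j => ‖x (s j) - x k‖) atTop (𝓝 ‖xb - x k‖) :=
      ((hstend.sub_const (x k)).norm)
    have hev : ∀ᶠ j in atTop, ‖x (s j) - x k‖ ≤ B * ψd k := by
      filter_upwards [eventually_ge_atTop k] with j hj
      have hsk : k ≤ s j := le_trans hj hsmono.le_apply
      have h1 := hsum k hk (s j) hsk
      have h2 : 0 ≤ B * ψd (s j) := mul_nonneg hBpos.le (hψdnonneg _)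
      have hms : B * (ψd k - ψd (s j)) = B * ψd k - B * ψd (s j) := mul_sub _ _ _
      linarith
    have := le_of_tendsto htd hev
    rwa [norm_sub_rev] at this
  -- lower bound on step sizes
  set tb : ℝ := min tmin (β * ((1 - σ) * ζ / Lc)) with htb
  have htbpos : 0 < tb :=
    lt_min htmin (mul_pos hβ0 (div_pos (mul_pos (by linarith) hζ) hLcpos))
  have hτlow : ∀ k, k₁ ≤ k → tb ≤ τ k := by
    intro k hk
    rcases hbt k with hcase | hcase
    · exact le_trans (min_le_left _ _) hcase
    · set sk : ℝ := τ k / β with hsk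
      have hskpos : 0 < sk := div_pos (hτpos k) hβ0
      have hD0 : 0 < ‖d k‖ := norm_pos_iff.2 (hdne k)
      -- the trial step is short
      have hshort : sk * ‖d k‖ ≤ R := by
        have h1 := hstep k (hinball k hk) (hKk k hk).2.2
        have h2 : 0 ≤ B * ψd (k + 1) := mul_nonneg hBpos.le (hψdnonneg _)
        have hms : B * (ψd k - ψd (k + 1)) = B * ψd k - B * ψd (k + 1) := mul_sub _ _ _
        have h3 : τ k * ‖d k‖ ≤ β * R := by
          have := (hKk k hk).2.1; linarith
        rw [hsk, div_mul_eq_mul_div, div_le_iff₀ hβ0]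
        calc τ k * ‖d k‖ ≤ β * R := h3
        _ = R * β := by ring
      -- the segment to the trial point stays in the ball of radius R₀
      set y : E := x k + sk • d k with hy
      have hyx : y - x k = sk • d k := by rw [hy]; abel
      have hyn : ‖y - x k‖ = sk * ‖d k‖ := by
        rw [hyx, norm_smul, Real.norm_eq_abs, abs_of_pos hskpos]
      have hseg : ∀ z ∈ segment ℝ (x k) y, z ∈ Metric.closedBall xb R₀ := by
        intro z hz
        rw [segment_eq_image'] at hz
        obtain ⟨t, ht, rfl⟩ := hz
        rw [Metric.mem_closedBall, dist_eq_norm]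
        have h1 : ‖x k + t • (y - x k) - xb‖ ≤ ‖x k - xb‖ + ‖t • (y - x k)‖ := by
          calc ‖x k + t • (y - x k) - xb‖ = ‖(x k - xb) + t • (y - x k)‖ := by congr 1; abel
          _ ≤ _ := norm_add_le _ _
        have h2 : ‖t • (y - x k)‖ ≤ sk * ‖d k‖ := by
          rw [norm_smul, Real.norm_eq_abs, abs_of_nonneg ht.1, ← hyn]
          calc t * ‖y - x k‖ ≤ 1 * ‖y - x k‖ :=
            mul_le_mul_of_nonneg_right ht.2 (norm_nonneg _)
          _ = ‖y - x k‖ := one_mul _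
        have h3 := hinR k hk
        linarith
      have hxkball : x k ∈ Metric.closedBall xb R₀ :=
        hseg (x k) (left_mem_segment ℝ _ _)
      -- descent lemma along the segment
      have hLbd : ∀ z ∈ segment ℝ (x k) y,
          ‖gradient φ z - gradient φ (x k)‖ ≤ Lc * (sk * ‖d k‖) := by
        intro z hz
        have h1 := hlipφ z (hseg z hz) (x k) hxkball
        refine h1.trans ?_
        refine mul_le_mul_of_nonneg_left ?_ hLcpos.le
        rw [segment_eq_image'] at hz
        obtain ⟨t, ht, rfl⟩ := hz
        have : x k + t • (y - x k) - x k = t • (y - x k) := by abel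
        rw [this, norm_smul, Real.norm_eq_abs, abs_of_nonneg ht.1, ← hyn]
        calc t * ‖y - x k‖ ≤ 1 * ‖y - x k‖ :=
          mul_le_mul_of_nonneg_right ht.2 (norm_nonneg _)
        _ = ‖y - x k‖ := one_mul _
      have hdl := rcsn_descent hφdiff hLbd
      rw [hyx] at hdl
      rw [real_inner_smul_right, norm_smul, Real.norm_eq_abs, abs_of_pos hskpos] at hdl
      -- combine with failure of the line search at sk
      have hfail : φ (x k) + σ * sk * ⟪gradient φ (x k), d k⟫ < φ y := by
        rw [hy, hsk]; exact hcase
      have hdes := hdesc k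
      have hkey : (1 - σ) * ζ < Lc * sk := by
        have h5 : φ y ≤ φ (x k) + sk * ⟪gradient φ (x k), d k⟫
            + Lc * (sk * ‖d k‖) * (sk * ‖d k‖) := hdl
        have h6 : σ * sk * ⟪gradient φ (x k), d k⟫ <
            sk * ⟪gradient φ (x k), d k⟫ + Lc * (sk * ‖d k‖) * (sk * ‖d k‖) := by
          linarith
        nlinarith [mul_pos hskpos (pow_pos hD0 2), mul_pos hskpos hD0,
          mul_le_mul_of_nonneg_left hdes (mul_pos hskpos (sub_pos.2 hσ1)).le]
      have h7 : (1 - σ) * ζ / Lc ≤ sk := by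
        rw [div_le_iff₀ hLcpos]
        nlinarith
      have h8 : β * ((1 - σ) * ζ / Lc) ≤ τ k := by
        have : β * ((1 - σ) * ζ / Lc) ≤ β * sk := mul_le_mul_of_nonneg_left h7 hβ0.le
        have hβsk : β * sk = τ k := by rw [hsk]; field_simp
        linarith
      exact le_trans (min_le_right _ _) h8
  -- rate recursion
  set q : ℝ := 2 * θ - 1 with hq
  have hq0 : 0 < q := by rw [hq]; linarith
  have hq1 : q ≤ 1 := by rw [hq]; linarith
  set c : ℝ := σ * ζ * tb / (C ^ 2 * (M * (1 - θ)) ^ 2) with hc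
  have hMθ : 0 < M * (1 - θ) := mul_pos hM (by linarith)
  have hc0 : 0 < c := div_pos (by positivity) (by positivity)
  have hklθ : ∀ k, k₁ ≤ k → (r k) ^ θ ≤ M * (1 - θ) * ‖gradient φ (x k)‖ := by
    intro k hk
    have h1 : φ xb < φ (x k) := by have := hrpos k; simp only [hr] at this; linarith
    have h2 : φ (x k) < φ xb + η := by
      have := (hKk k hk).2.2; simp only [hr] at this; linarith
    have hkl := hKL (x k) (le_trans (hinR k hk) (by linarith)) h1 h2
    have hrθ : (0:ℝ) < (r k) ^ θ := Real.rpow_pos_of_pos (hrpos k) θ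
    have h3 := mul_le_mul_of_nonneg_left hkl hrθ.le
    rw [mul_one] at h3
    have h4 : (r k) ^ θ * (M * (1 - θ) * (φ (x k) - φ xb) ^ (-θ) * ‖gradient φ (x k)‖)
        = M * (1 - θ) * ‖gradient φ (x k)‖ * ((r k) ^ θ * (r k) ^ (-θ)) := by
      simp only [hr]; ring
    have h5 : (r k) ^ θ * (r k) ^ (-θ) = 1 := by
      rw [← Real.rpow_add (hrpos k)]; simp
    rw [h4, h5, mul_one] at h3
    exact h3
  have hrec : ∀ k, k₁ ≤ k → c * (r k) ^ (q + 1) ≤ r k - r (k + 1) := by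
    intro k hk
    have hxball : x k ∈ Metric.closedBall xb R₀ := by
      rw [Metric.mem_closedBall, dist_eq_norm]
      exact le_trans (hinR k hk) (by linarith)
    have hCd := hwd k hxball
    have hklk := hklθ k hk
    have hrq : (r k) ^ (q + 1) = ((r k) ^ θ) ^ (2:ℕ) := by
      rw [← Real.rpow_natCast ((r k) ^ θ) 2, ← Real.rpow_mul (hrnonneg k)]
      congr 1
      push_cast
      rw [hq]; ring
    have hrθ0 : 0 ≤ (r k) ^ θ := (Real.rpow_pos_of_pos (hrpos k) θ).le
    have h2 : (r k) ^ θ ≤ M * (1 - θ) * (C * ‖d k‖) :=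
      hklk.trans (mul_le_mul_of_nonneg_left hCd hMθ.le)
    have h1 : ((r k) ^ θ) ^ (2:ℕ) ≤ (M * (1 - θ)) ^ 2 * (C ^ 2 * ‖d k‖ ^ 2) := by
      have := pow_le_pow_left₀ hrθ0 h2 2
      calc ((r k) ^ θ) ^ (2:ℕ) ≤ (M * (1 - θ) * (C * ‖d k‖)) ^ (2:ℕ) := this
      _ = (M * (1 - θ)) ^ 2 * (C ^ 2 * ‖d k‖ ^ 2) := by ring
    have h3 : σ * ζ * (tb * ‖d k‖ ^ 2) ≤ r k - r (k + 1) := by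
      have hd1 := hdec k
      have hτk := hτlow k hk
      have hd2 : σ * ζ * (tb * ‖d k‖ ^ 2) ≤ σ * ζ * (τ k * ‖d k‖ ^ 2) := by
        have h0 : (0:ℝ) ≤ ‖d k‖ ^ 2 := sq_nonneg _
        have h00 := mul_le_mul_of_nonneg_right hτk h0
        exact mul_le_mul_of_nonneg_left h00 (mul_pos hσ0 hζ).le
      simp only [hr]; linarith
    have h4 : c * ((M * (1 - θ)) ^ 2 * (C ^ 2 * ‖d k‖ ^ 2)) = σ * ζ * (tb * ‖d k‖ ^ 2) := by
      rw [hc]; field_simp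
    calc c * (r k) ^ (q + 1) = c * ((r k) ^ θ) ^ (2:ℕ) := by rw [hrq]
    _ ≤ c * ((M * (1 - θ)) ^ 2 * (C ^ 2 * ‖d k‖ ^ 2)) := mul_le_mul_of_nonneg_left h1 hc0.le
    _ = σ * ζ * (tb * ‖d k‖ ^ 2) := h4
    _ ≤ r k - r (k + 1) := h3
  set c' : ℝ := q * c with hc'
  have hc'0 : 0 < c' := mul_pos hq0 hc0
  have hu : ∀ n : ℕ, c' * n ≤ (r (k₁ + n)) ^ (-q) := by
    intro n
    induction n with
    | zero => simpa using (Real.rpow_pos_of_pos (hrpos (k₁ + 0)) (-q)).le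
    | succ n ih =>
      have hcv := rcsn_convex_neg (hrpos (k₁ + n + 1)) (hrdec (k₁ + n)).le hq0 hq1
      have hrk := hrec (k₁ + n) (Nat.le_add_right _ _)
      have hb1 : (0:ℝ) < (r (k₁ + n)) ^ (-q - 1) := Real.rpow_pos_of_pos (hrpos _) _
      have h6 : q * (r (k₁ + n)) ^ (-q - 1) * (c * (r (k₁ + n)) ^ (q + 1)) ≤
          q * (r (k₁ + n)) ^ (-q - 1) * (r (k₁ + n) - r (k₁ + n + 1)) := by
        refine mul_le_mul_of_nonneg_left hrk ?_
        positivity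
      have h7 : (r (k₁ + n)) ^ (-q - 1) * (r (k₁ + n)) ^ (q + 1) = 1 := by
        rw [← Real.rpow_add (hrpos _)]; norm_num
      have h8 : q * (r (k₁ + n)) ^ (-q - 1) * (c * (r (k₁ + n)) ^ (q + 1)) = q * c := by
        calc q * (r (k₁ + n)) ^ (-q - 1) * (c * (r (k₁ + n)) ^ (q + 1))
            = q * c * ((r (k₁ + n)) ^ (-q - 1) * (r (k₁ + n)) ^ (q + 1)) := by ring
        _ = q * c := by rw [h7, mul_one]
      have h9 : q * c ≤ (r (k₁ + n + 1)) ^ (-q) - (r (k₁ + n)) ^ (-q) := by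
        calc q * c = q * (r (k₁ + n)) ^ (-q - 1) * (c * (r (k₁ + n)) ^ (q + 1)) := h8.symm
        _ ≤ q * (r (k₁ + n)) ^ (-q - 1) * (r (k₁ + n) - r (k₁ + n + 1)) := h6
        _ ≤ _ := hcv
      have h10 : k₁ + (n + 1) = k₁ + n + 1 := by ring
      rw [h10]
      push_cast
      rw [hc'] at ih ⊢
      linarith
  -- conclusion
  refine ⟨B * M * ((c' / 2) ^ (-(1 / q))) ^ (1 - θ), ?_, 2 * k₁ + 2, ?_⟩
  · have h1 : (0:ℝ) < (c' / 2) ^ (-(1 / q)) := Real.rpow_pos_of_pos (by positivity) _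
    have h2 : (0:ℝ) < ((c' / 2) ^ (-(1 / q))) ^ (1 - θ) := Real.rpow_pos_of_pos h1 _
    positivity
  · intro k hk
    have hkk₁ : k₁ ≤ k := by omega
    set n : ℕ := k - k₁ with hn
    have hkn : k = k₁ + n := by omega
    have hnk : (k:ℝ) ≤ 2 * (n:ℝ) := by
      have : k ≤ 2 * n := by omega
      exact_mod_cast this
    have hkpos : (0:ℝ) < k := by
      have : 0 < k := by omega
      exact_mod_cast this
    have h9 : c' * ((k:ℝ) / 2) ≤ (r k) ^ (-q) := by
      have h1 := hu n
      rw [← hkn] at h1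
      have h2 : c' * ((k:ℝ) / 2) ≤ c' * (n:ℝ) := by
        refine mul_le_mul_of_nonneg_left ?_ hc'0.le
        linarith
      linarith
    have hy0 : (0:ℝ) < c' * ((k:ℝ) / 2) := by positivity
    have h10 : r k ≤ (c' * ((k:ℝ) / 2)) ^ (-(1 / q)) := by
      have h11 : ((r k) ^ (-q)) ^ (-(1 / q)) ≤ (c' * ((k:ℝ) / 2)) ^ (-(1 / q)) :=
        Real.rpow_le_rpow_of_nonpos hy0 h9 (neg_nonpos.mpr (by positivity))
      have h12 : ((r k) ^ (-q)) ^ (-(1 / q)) = r k := by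
        rw [← Real.rpow_mul (hrnonneg k)]
        rw [show (-q) * (-(1 / q)) = 1 by field_simp, Real.rpow_one]
      rwa [h12] at h11
    have h13 : c' * ((k:ℝ) / 2) = c' / 2 * (k:ℝ) := by ring
    have h14 : (c' / 2 * (k:ℝ)) ^ (-(1 / q)) =
        (c' / 2) ^ (-(1 / q)) * (k:ℝ) ^ (-(1 / q)) :=
      Real.mul_rpow (by positivity) hkpos.le
    have hrpow0 : (0:ℝ) ≤ (c' / 2) ^ (-(1 / q)) := (Real.rpow_pos_of_pos (by positivity) _).le
    calc ‖x k - xb‖ ≤ B * ψd k := hclose k hkk₁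
    _ = B * M * (r k) ^ (1 - θ) := by simp only [hψd]; ring
    _ ≤ B * M * ((c' / 2) ^ (-(1 / q)) * (k:ℝ) ^ (-(1 / q))) ^ (1 - θ) := by
        refine mul_le_mul_of_nonneg_left
          (Real.rpow_le_rpow (hrnonneg k) ?_ (by linarith)) (by positivity)
        rw [← h14, ← h13]; exact h10
    _ = B * M * ((c' / 2) ^ (-(1 / q))) ^ (1 - θ) * (k:ℝ) ^ (-((1 - θ) / q)) := by
        rw [Real.mul_rpow hrpow0 (Real.rpow_nonneg hkpos.le _),
          ← Real.rpow_mul hkpos.le]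
        rw [show (-(1 / q)) * (1 - θ) = -((1 - θ) / q) by ring]
        ring
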